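/- Let H be a complex Hilbert space, S a positive bounded operator on H, D a dense linear subspace of H, and p : H → [0,∞] a lower semicontinuous quadratic extended seminorm. If p(u) = ⟨S u, u⟩ for every u ∈ D, then p(u) = ⟨S u, u⟩ for every u ∈ H; in particular p is finite everywhere. -/

import Mathlib

open scoped InnerProductSpace ENNReal NNReal

/-- A lower semicontinuous quadratic extended seminorm on a complex Hilbert space
that agrees on a dense subspace with the quadratic form of a bounded positive
operator agrees with it everywhere. -/
theorem lsc_quadratic_extended_seminorm_eq_of_dense
    {H : Type*} [NormedAddCommGroup H] [InnerProductSpace ℂ H] [CompleteSpace H]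
    (S : H →L[ℂ] H) (hS : S.IsPositive)
    (D : Submodule ℂ H) (hD : Dense (D : Set H))
    (p : H → ℝ≥0∞)
    (hquad : ∀ (c : ℂ) (v : H), p (c • v) = ((‖c‖₊ ^ 2 : ℝ≥0) : ℝ≥0∞) * p v)
    (htri : ∀ v w : H, (p (v + w)) ^ (1 / 2 : ℝ) ≤ p v ^ (1 / 2 : ℝ) + p w ^ (1 / 2 : ℝ))
    (hlsc : ∀ α : ℝ≥0, IsClosed {v : H | p v ≤ (α : ℝ≥0∞)})
    (hagree : ∀ u ∈ D, p u = ENNReal.ofReal ((⟪u, S u⟫_ℂ).re)) :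
    ∀ u : H, p u = ENNReal.ofReal ((⟪u, S u⟫_ℂ).re) := by
  set q : H → ℝ := fun v => (⟪v, S v⟫_ℂ).re with hqdef
  have hqcont : Continuous q := by
    exact Complex.continuous_re.comp (continuous_id.inner S.continuous)
  -- Step 1: p v ≤ ofReal (q v) everywhere
  have hstep1 : ∀ v : H, p v ≤ ENNReal.ofReal (q v) := by
    intro v
    obtain ⟨f, hfD, hfv⟩ := mem_closure_iff_seq_limit.mp (hD v)
    have hqf : Filter.Tendsto (fun n => ENNReal.ofReal (q (f n))) Filter.atTop
        (nhds (ENNReal.ofReal (q v))) :=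
      (ENNReal.continuous_ofReal.tendsto _).comp ((hqcont.tendsto v).comp hfv)
    refine le_of_forall_gt_imp_ge_of_dense fun a ha => ?_
    rcases eq_or_ne a ⊤ with rfl | hatop
    · exact le_top
    · lift a to ℝ≥0 using hatop
      have hev : ∀ᶠ n in Filter.atTop, f n ∈ {x : H | p x ≤ (a : ℝ≥0∞)} := by
        filter_upwards [hqf.eventually_lt_const ha] with n hn
        simpa [hagree (f n) (hfD n)] using hn.le
      exact (hlsc a).mem_of_tendsto hfv hev
  intro u
  refine le_antisymm (hstep1 u) ?_
  obtain ⟨f, hfD, hfv⟩ := mem_closure_iff_seq_limit.mp (hD u)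
  have hle : ∀ n, ENNReal.ofReal (q (f n)) ^ (1 / 2 : ℝ) ≤
      p u ^ (1 / 2 : ℝ) + ENNReal.ofReal (q (f n - u)) ^ (1 / 2 : ℝ) := by
    intro n
    have h1 : p (f n) ^ (1 / 2 : ℝ) ≤ p u ^ (1 / 2 : ℝ) + p (f n - u) ^ (1 / 2 : ℝ) := by
      simpa [add_sub_cancel] using htri u (f n - u)
    rw [hagree (f n) (hfD n)] at h1
    exact h1.trans (add_le_add le_rfl (ENNReal.rpow_le_rpow (hstep1 _) (by norm_num)))
  have hcont2 : Continuous fun x : ℝ≥0∞ => x ^ (1 / 2 : ℝ) :=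
    ENNReal.continuous_rpow_const
  have hL : Filter.Tendsto (fun n => ENNReal.ofReal (q (f n)) ^ (1 / 2 : ℝ)) Filter.atTop
      (nhds (ENNReal.ofReal (q u) ^ (1 / 2 : ℝ))) :=
    (hcont2.tendsto _).comp ((ENNReal.continuous_ofReal.tendsto _).comp ((hqcont.tendsto u).comp hfv))
  have hsub : Filter.Tendsto (fun n => f n - u) Filter.atTop (nhds 0) := by
    simpa using hfv.sub (tendsto_const_nhds (x := u))
  have hq0 : q 0 = 0 := by simp [hqdef]
  have hR : Filter.Tendsto
      (fun n => p u ^ (1 / 2 : ℝ) + ENNReal.ofReal (q (f n - u)) ^ (1 / 2 : ℝ)) Filter.atTop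
      (nhds (p u ^ (1 / 2 : ℝ))) := by
    have : Filter.Tendsto (fun n => ENNReal.ofReal (q (f n - u)) ^ (1 / 2 : ℝ)) Filter.atTop
        (nhds 0) := by
      have := (hcont2.tendsto _).comp
        ((ENNReal.continuous_ofReal.tendsto _).comp ((hqcont.tendsto 0).comp hsub))
      simpa [hq0, ENNReal.zero_rpow_of_pos, Function.comp_def] using this
    simpa using tendsto_const_nhds.add this
  have hfinal : ENNReal.ofReal (q u) ^ (1 / 2 : ℝ) ≤ p u ^ (1 / 2 : ℝ) :=
    le_of_tendsto_of_tendsto' hL hR hle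
  have := ENNReal.rpow_le_rpow hfinal (by norm_num : (0:ℝ) ≤ 2)
  rw [← ENNReal.rpow_mul, ← ENNReal.rpow_mul] at this
  norm_num at this
  exact this
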